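/- Let A be a finite set, n ∈ ℕ, and let X ⊆ A^n contain at least five elements. Let P ⊆ Sym(A^n) be the set of all 3-cycles (x y z) of distinct elements x, y, z ∈ X. Then every 2-controlled P-permutation of A^{2+n} belongs to the subgroup of Sym(A^{2+n}) generated by all extensions to arity 2+n of 1-controlled P-permutations (which are permutations of A^{1+n}). -/

import Mathlib

/-- The wire permutation `π_α` of `A^n` induced by `α ∈ S_n`: `π_α(x) i = x (α⁻¹ i)`. -/
def wirePerm {A : Type*} {n : ℕ} (α : Equiv.Perm (Fin n)) : Equiv.Perm (Fin n → A) :=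
  Equiv.arrowCongr α (Equiv.refl A)

/-- Splitting `A^(k+ℓ)` into `A^k × A^ℓ`. -/
def splitEquiv (A : Type*) (k ℓ : ℕ) : (Fin (k + ℓ) → A) ≃ (Fin k → A) × (Fin ℓ → A) :=
  (Equiv.arrowCongr finSumFinEquiv.symm (Equiv.refl A)).trans
    (Equiv.sumArrowEquivProdArrow _ _ A)

/-- `f ⊕ id`: the permutation of `A^n` acting as `f` on the first `ℓ` coordinates and
fixing the remaining ones. -/
def oplusId {A : Type*} {ℓ n : ℕ} (h : ℓ ≤ n) (f : Equiv.Perm (Fin ℓ → A)) :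
    Equiv.Perm (Fin n → A) :=
  (((Equiv.arrowCongr (finCongr (Nat.add_sub_cancel' h).symm) (Equiv.refl A)).trans
    (splitEquiv A ℓ (n - ℓ))).symm).permCongr
      (Equiv.prodCongr f (Equiv.refl (Fin (n - ℓ) → A)))

/-- `g ∈ Sym(A^n)` is an extension of `f ∈ Sym(A^ℓ)` iff it is a conjugate of `f ⊕ id`
by a wire permutation. -/
def IsExtensionOf {A : Type*} {ℓ n : ℕ} (f : Equiv.Perm (Fin ℓ → A))
    (g : Equiv.Perm (Fin n → A)) : Prop :=
  ∃ (h : ℓ ≤ n) (α : Equiv.Perm (Fin n)),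
    g = wirePerm α * oplusId h f * (wirePerm α)⁻¹

/-- The `w`-controlled permutation `f_{w,p}` of `A^(k+ℓ)`: maps `(u,v)` to `(u, p v)`
if `u = w` and fixes it otherwise. -/
def controlledPerm {A : Type*} [DecidableEq A] {k ℓ : ℕ} (w : Fin k → A)
    (p : Equiv.Perm (Fin ℓ → A)) : Equiv.Perm (Fin (k + ℓ) → A) :=
  (splitEquiv A k ℓ).symm.permCongr
    { toFun := fun uv => (uv.1, if uv.1 = w then p uv.2 else uv.2)
      invFun := fun uv => (uv.1, if uv.1 = w then p.symm uv.2 else uv.2)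
      left_inv := fun uv => by by_cases h : uv.1 = w <;> simp [h, Prod.ext_iff]
      right_inv := fun uv => by by_cases h : uv.1 = w <;> simp [h, Prod.ext_iff] }

/-- The `k`-controlled `P`-permutations of `A^(k+ℓ)`: wire-permutation conjugates of the
permutations `f_{w,p}` with `p ∈ P`. -/
def ControlledPerms {A : Type*} [DecidableEq A] {ℓ : ℕ} (k : ℕ)
    (P : Set (Equiv.Perm (Fin ℓ → A))) : Set (Equiv.Perm (Fin (k + ℓ) → A)) :=
  { g | ∃ w : Fin k → A, ∃ p ∈ P, ∃ α : Equiv.Perm (Fin (k + ℓ)),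
      g = wirePerm α * controlledPerm w p * (wirePerm α)⁻¹ }

section Aux

variable {A : Type*}

lemma wirePerm_apply {n : ℕ} (α : Equiv.Perm (Fin n)) (g : Fin n → A) (i : Fin n) :
    wirePerm α g i = g (α.symm i) := rfl

lemma wirePerm_mul {n : ℕ} (α β : Equiv.Perm (Fin n)) :
    wirePerm (A := A) (α * β) = wirePerm α * wirePerm β := rfl

lemma wirePerm_one {n : ℕ} : wirePerm (A := A) (1 : Equiv.Perm (Fin n)) = 1 := rfl

lemma wirePerm_inv {n : ℕ} (α : Equiv.Perm (Fin n)) :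
    wirePerm (A := A) α⁻¹ = (wirePerm α)⁻¹ := by ext g i; rfl

lemma wirePerm_inv_apply {n : ℕ} (α : Equiv.Perm (Fin n)) (g : Fin n → A) (i : Fin n) :
    (wirePerm α)⁻¹ g i = g (α i) := by rw [← wirePerm_inv]; rfl

lemma splitEquiv_fst {k ℓ : ℕ} (v : Fin (k + ℓ) → A) (i : Fin k) :
    (splitEquiv A k ℓ v).1 i = v (Fin.castAdd ℓ i) := by
  simp [splitEquiv, Equiv.sumArrowEquivProdArrow]

lemma splitEquiv_snd {k ℓ : ℕ} (v : Fin (k + ℓ) → A) (j : Fin ℓ) :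
    (splitEquiv A k ℓ v).2 j = v (Fin.natAdd k j) := by
  simp [splitEquiv, Equiv.sumArrowEquivProdArrow]

/-- The auxiliary conditional permutation on a product. -/
def condPerm {U V : Type*} (c : U → Prop) [DecidablePred c] (p : Equiv.Perm V) :
    Equiv.Perm (U × V) where
  toFun x := (x.1, if c x.1 then p x.2 else x.2)
  invFun x := (x.1, if c x.1 then p.symm x.2 else x.2)
  left_inv x := by by_cases h : c x.1 <;> simp [h]
  right_inv x := by by_cases h : c x.1 <;> simp [h]

lemma condPerm_apply {U V : Type*} (c : U → Prop) [DecidablePred c] (p : Equiv.Perm V)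
    (x : U × V) : condPerm c p x = (x.1, if c x.1 then p x.2 else x.2) := rfl

lemma condPerm_inv {U V : Type*} (c : U → Prop) [DecidablePred c] (p : Equiv.Perm V) :
    (condPerm c p)⁻¹ = condPerm c p⁻¹ := rfl

lemma condPerm_congr {U V : Type*} (c d : U → Prop) [DecidablePred c] [DecidablePred d]
    (p : Equiv.Perm V) (h : ∀ u, c u ↔ d u) : condPerm c p = condPerm d p := by
  ext x
  · rfl
  · by_cases hc : c x.1
    · simp [condPerm_apply, if_pos hc, if_pos ((h x.1).mp hc)]
    · simp [condPerm_apply, if_neg hc, if_neg (fun hd => hc ((h x.1).mpr hd))]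

lemma condPerm_commutator {U V : Type*} (c d : U → Prop) [DecidablePred c] [DecidablePred d]
    (p q : Equiv.Perm V) :
    condPerm c p * condPerm d q * (condPerm c p)⁻¹ * (condPerm d q)⁻¹ =
      condPerm (fun u => c u ∧ d u) (p * q * p⁻¹ * q⁻¹) := by
  ext x
  · rfl
  · obtain ⟨u, v⟩ := x
    by_cases hc : c u <;> by_cases hd : d u <;>
      simp [condPerm_inv, condPerm_apply, Equiv.Perm.mul_apply, hc, hd]

lemma permCongr_mul {α β : Type*} (e : α ≃ β) (f g : Equiv.Perm α) :
    e.permCongr (f * g) = e.permCongr f * e.permCongr g := by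
  ext x; simp [Equiv.permCongr_apply]

lemma permCongr_inv {α β : Type*} (e : α ≃ β) (f : Equiv.Perm α) :
    e.permCongr f⁻¹ = (e.permCongr f)⁻¹ := by
  ext x; simp [Equiv.permCongr_apply]; rfl

lemma three_cycle_commutator {β : Type*} [DecidableEq β] {x y z u v : β}
    (hxy : x ≠ y) (hxz : x ≠ z) (hxu : x ≠ u) (hxv : x ≠ v)
    (hyz : y ≠ z) (hyu : y ≠ u) (hyv : y ≠ v)
    (hzu : z ≠ u) (hzv : z ≠ v) (huv : u ≠ v) :
    Equiv.swap x y * Equiv.swap y z =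
      (Equiv.swap x y * Equiv.swap y u) * (Equiv.swap x z * Equiv.swap z v) *
      (Equiv.swap x y * Equiv.swap y u)⁻¹ * (Equiv.swap x z * Equiv.swap z v)⁻¹ := by
  have := hxy.symm; have := hxz.symm; have := hxu.symm; have := hxv.symm
  have := hyz.symm; have := hyu.symm; have := hyv.symm
  have := hzu.symm; have := hzv.symm; have := huv.symm
  ext t
  simp only [mul_inv_rev, Equiv.swap_inv, Equiv.Perm.mul_apply]
  rcases eq_or_ne t x with rfl | hx
  · simp [Equiv.swap_apply_of_ne_of_ne, Equiv.swap_apply_left, Equiv.swap_apply_right, *]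
  rcases eq_or_ne t y with rfl | hy
  · simp [Equiv.swap_apply_of_ne_of_ne, Equiv.swap_apply_left, Equiv.swap_apply_right, *]
  rcases eq_or_ne t z with rfl | hz
  · simp [Equiv.swap_apply_of_ne_of_ne, Equiv.swap_apply_left, Equiv.swap_apply_right, *]
  rcases eq_or_ne t u with rfl | hu
  · simp [Equiv.swap_apply_of_ne_of_ne, Equiv.swap_apply_left, Equiv.swap_apply_right, *]
  rcases eq_or_ne t v with rfl | hv
  · simp [Equiv.swap_apply_of_ne_of_ne, Equiv.swap_apply_left, Equiv.swap_apply_right, *]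
  · simp [Equiv.swap_apply_of_ne_of_ne, *]

/-- The wire permutation used for extensions: sends coordinate `0` to `0` resp. `1`
(according to `b`), coordinates `1,…,n` to `2,…,n+1`, and coordinate `n+1` to the
remaining control coordinate. -/
def insPerm (n : ℕ) (b : Bool) : Equiv.Perm (Fin (2 + n)) where
  toFun i :=
    if (i : ℕ) = 0 then (if b then ⟨1, by omega⟩ else ⟨0, by omega⟩)
    else if h : (i : ℕ) < 1 + n then ⟨(i : ℕ) + 1, by omega⟩
    else (if b then ⟨0, by omega⟩ else ⟨1, by omega⟩)
  invFun j :=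
    if (j : ℕ) = (if b then 1 else 0) then ⟨0, by omega⟩
    else if (j : ℕ) = (if b then 0 else 1) then ⟨1 + n, by omega⟩
    else ⟨(j : ℕ) - 1, by omega⟩
  left_inv i := by
    have hi := i.isLt
    rcases b <;> simp only [Bool.false_eq_true, if_true, if_false] <;>
      split_ifs <;> (first | rfl |
        ((simp only [Fin.ext_iff, Fin.val_mk] at *) <;> (first | omega | (simp_all <;> omega))))
  right_inv j := by
    have hj := j.isLt
    rcases b <;> simp only [Bool.false_eq_true, if_true, if_false] <;>
      split_ifs <;> (first | rfl |
        ((simp only [Fin.ext_iff, Fin.val_mk] at *) <;> (first | omega | (simp_all <;> omega))))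

lemma h12 (n : ℕ) : 1 + n ≤ 2 + n := by omega

lemma insPerm_ca_zero {n : ℕ} (b : Bool) :
    insPerm n b (Fin.cast (Nat.add_sub_cancel' (h12 n))
        (Fin.castAdd (2 + n - (1 + n)) (Fin.castAdd n (0 : Fin 1)))) =
      Fin.castAdd n (if b then (1 : Fin 2) else 0) := by
  rcases b <;> (ext; simp [insPerm] <;> rfl)

lemma insPerm_ca_nat {n : ℕ} (b : Bool) (j : Fin n) :
    insPerm n b (Fin.cast (Nat.add_sub_cancel' (h12 n))
        (Fin.castAdd (2 + n - (1 + n)) (Fin.natAdd 1 j))) = Fin.natAdd 2 j := by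
  have hj := j.isLt
  rcases b <;>
    (ext
     simp only [insPerm, Equiv.coe_fn_mk, Fin.coe_cast, Fin.coe_castAdd, Fin.coe_natAdd]
     rw [if_neg (by omega), dif_pos (by omega)]
     simp only [Fin.val_mk]
     omega)

lemma insPerm_na {n : ℕ} (b : Bool) (j : Fin (2 + n - (1 + n))) :
    insPerm n b (Fin.cast (Nat.add_sub_cancel' (h12 n)) (Fin.natAdd (1 + n) j)) =
      Fin.castAdd n (if b then (0 : Fin 2) else 1) := by
  have hj := j.isLt
  rcases b <;>
    (ext
     simp only [insPerm, Equiv.coe_fn_mk, Fin.coe_cast, Fin.coe_castAdd, Fin.coe_natAdd]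
     rw [if_neg (by omega), dif_neg (by omega)]
     simp)

end Aux

section Split

variable {A : Type*}

lemma oplusId_split {ℓ n : ℕ} (h : ℓ ≤ n) (f : Equiv.Perm (Fin ℓ → A)) (u : Fin n → A) :
    ((Equiv.arrowCongr (finCongr (Nat.add_sub_cancel' h).symm) (Equiv.refl A)).trans
        (splitEquiv A ℓ (n - ℓ))) (oplusId h f u) =
      (f (((Equiv.arrowCongr (finCongr (Nat.add_sub_cancel' h).symm) (Equiv.refl A)).trans
        (splitEquiv A ℓ (n - ℓ))) u).1,
       (((Equiv.arrowCongr (finCongr (Nat.add_sub_cancel' h).symm) (Equiv.refl A)).trans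
        (splitEquiv A ℓ (n - ℓ))) u).2) := by
  conv_lhs => rw [oplusId]
  rw [Equiv.permCongr_apply, Equiv.symm_symm, Equiv.apply_symm_apply]
  exact Prod.ext (by simp) (by simp)

lemma bigE_fst {ℓ n : ℕ} (h : ℓ ≤ n) (u : Fin n → A) (i : Fin ℓ) :
    (((Equiv.arrowCongr (finCongr (Nat.add_sub_cancel' h).symm) (Equiv.refl A)).trans
        (splitEquiv A ℓ (n - ℓ))) u).1 i =
      u (Fin.cast (Nat.add_sub_cancel' h) (Fin.castAdd (n - ℓ) i)) := by
  simp [splitEquiv, Equiv.sumArrowEquivProdArrow]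

lemma bigE_snd {ℓ n : ℕ} (h : ℓ ≤ n) (u : Fin n → A) (j : Fin (n - ℓ)) :
    (((Equiv.arrowCongr (finCongr (Nat.add_sub_cancel' h).symm) (Equiv.refl A)).trans
        (splitEquiv A ℓ (n - ℓ))) u).2 j =
      u (Fin.cast (Nat.add_sub_cancel' h) (Fin.natAdd ℓ j)) := by
  simp [splitEquiv, Equiv.sumArrowEquivProdArrow]

lemma oplusId_apply_lo {ℓ n : ℕ} (h : ℓ ≤ n) (f : Equiv.Perm (Fin ℓ → A)) (u : Fin n → A)
    (i : Fin ℓ) :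
    oplusId h f u (Fin.cast (Nat.add_sub_cancel' h) (Fin.castAdd (n - ℓ) i)) =
      f (fun i' => u (Fin.cast (Nat.add_sub_cancel' h) (Fin.castAdd (n - ℓ) i'))) i := by
  set E := ((Equiv.arrowCongr (finCongr (Nat.add_sub_cancel' h).symm) (Equiv.refl A)).trans
    (splitEquiv A ℓ (n - ℓ))) with hE
  have h1 : (E (oplusId h f u)).1 i =
      oplusId h f u (Fin.cast (Nat.add_sub_cancel' h) (Fin.castAdd (n - ℓ) i)) :=
    bigE_fst h _ i
  have h2 : E (oplusId h f u) = (f (E u).1, (E u).2) := oplusId_split h f u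
  rw [h2] at h1
  dsimp only at h1
  have h3 : (E u).1 = fun i' =>
      u (Fin.cast (Nat.add_sub_cancel' h) (Fin.castAdd (n - ℓ) i')) :=
    funext fun i' => bigE_fst h u i'
  rw [h3] at h1
  exact h1.symm

lemma oplusId_apply_hi {ℓ n : ℕ} (h : ℓ ≤ n) (f : Equiv.Perm (Fin ℓ → A)) (u : Fin n → A)
    (j : Fin (n - ℓ)) :
    oplusId h f u (Fin.cast (Nat.add_sub_cancel' h) (Fin.natAdd ℓ j)) =
      u (Fin.cast (Nat.add_sub_cancel' h) (Fin.natAdd ℓ j)) := by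
  set E := ((Equiv.arrowCongr (finCongr (Nat.add_sub_cancel' h).symm) (Equiv.refl A)).trans
    (splitEquiv A ℓ (n - ℓ))) with hE
  have h1 : (E (oplusId h f u)).2 j =
      oplusId h f u (Fin.cast (Nat.add_sub_cancel' h) (Fin.natAdd ℓ j)) :=
    bigE_snd h _ j
  have h2 : E (oplusId h f u) = (f (E u).1, (E u).2) := oplusId_split h f u
  rw [h2] at h1
  dsimp only at h1
  have h3 : (E u).2 j = u (Fin.cast (Nat.add_sub_cancel' h) (Fin.natAdd ℓ j)) :=
    bigE_snd h u j
  rw [h3] at h1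
  exact h1.symm

variable [DecidableEq A]

lemma controlledPerm_split {k ℓ : ℕ} (w : Fin k → A) (p : Equiv.Perm (Fin ℓ → A))
    (t : Fin (k + ℓ) → A) :
    splitEquiv A k ℓ (controlledPerm w p t) =
      ((splitEquiv A k ℓ t).1,
        if (splitEquiv A k ℓ t).1 = w then p (splitEquiv A k ℓ t).2
        else (splitEquiv A k ℓ t).2) := by
  conv_lhs => rw [controlledPerm]
  rw [Equiv.permCongr_apply, Equiv.symm_symm, Equiv.apply_symm_apply]
  rfl

lemma controlledPerm_apply_castAdd {k ℓ : ℕ} (w : Fin k → A) (p : Equiv.Perm (Fin ℓ → A))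
    (t : Fin (k + ℓ) → A) (i : Fin k) :
    controlledPerm w p t (Fin.castAdd ℓ i) = t (Fin.castAdd ℓ i) := by
  have h1 : (splitEquiv A k ℓ (controlledPerm w p t)).1 i =
      controlledPerm w p t (Fin.castAdd ℓ i) := splitEquiv_fst _ i
  rw [controlledPerm_split] at h1
  dsimp only at h1
  rw [splitEquiv_fst] at h1
  exact h1.symm

lemma controlledPerm_apply_natAdd {k ℓ : ℕ} (w : Fin k → A) (p : Equiv.Perm (Fin ℓ → A))
    (t : Fin (k + ℓ) → A) (j : Fin ℓ) :
    controlledPerm w p t (Fin.natAdd k j) =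
      if (fun i => t (Fin.castAdd ℓ i)) = w then p (fun j' => t (Fin.natAdd k j')) j
      else t (Fin.natAdd k j) := by
  have h1 : (splitEquiv A k ℓ (controlledPerm w p t)).2 j =
      controlledPerm w p t (Fin.natAdd k j) := splitEquiv_snd _ j
  rw [controlledPerm_split] at h1
  dsimp only at h1
  have e1 : (splitEquiv A k ℓ t).1 = fun i => t (Fin.castAdd ℓ i) :=
    funext fun i => splitEquiv_fst t i
  have e2 : (splitEquiv A k ℓ t).2 = fun j' => t (Fin.natAdd k j') :=
    funext fun j' => splitEquiv_snd t j'
  rw [e1, e2] at h1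
  rw [← h1]
  by_cases hc : (fun i => t (Fin.castAdd ℓ i)) = w
  · rw [if_pos hc, if_pos hc]
  · rw [if_neg hc, if_neg hc]

lemma controlledPerm_eq_condPerm {k ℓ : ℕ} (w : Fin k → A) (p : Equiv.Perm (Fin ℓ → A)) :
    controlledPerm w p =
      (splitEquiv A k ℓ).symm.permCongr (condPerm (fun u => u = w) p) := rfl

end Split

section MainExt

variable {A : Type*} [DecidableEq A] {n : ℕ}

lemma main_ext (b : Bool) (a : A) (p : Equiv.Perm (Fin n → A)) :
    wirePerm (insPerm n b) * oplusId (h12 n) (controlledPerm (fun _ : Fin 1 => a) p) *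
        (wirePerm (insPerm n b))⁻¹ =
      (splitEquiv A 2 n).symm.permCongr
        (condPerm (fun u : Fin 2 → A => u (if b then 1 else 0) = a) p) := by
  apply Equiv.ext; intro v
  set F : Equiv.Perm (Fin (2 + n) → A) :=
    wirePerm (insPerm n b) * oplusId (h12 n) (controlledPerm (fun _ : Fin 1 => a) p) *
      (wirePerm (insPerm n b))⁻¹ with hF
  rw [Equiv.permCongr_apply, Equiv.symm_symm, Equiv.eq_symm_apply]
  have hu : (wirePerm (insPerm n b))⁻¹ v = fun y => v (insPerm n b y) :=
    funext fun y => wirePerm_inv_apply _ _ _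
  have hmul : ∀ x : Fin (2 + n),
      F v x = oplusId (h12 n) (controlledPerm (fun _ : Fin 1 => a) p)
        (fun y => v (insPerm n b y)) ((insPerm n b).symm x) := by
    intro x
    rw [hF, Equiv.Perm.mul_apply, Equiv.Perm.mul_apply, hu, wirePerm_apply]
  -- symm value facts
  have s0 : (insPerm n b).symm (Fin.castAdd n (if b then (1 : Fin 2) else 0)) =
      Fin.cast (Nat.add_sub_cancel' (h12 n))
        (Fin.castAdd (2 + n - (1 + n)) (Fin.castAdd n (0 : Fin 1))) := by
    rw [Equiv.symm_apply_eq, insPerm_ca_zero]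
  have s1 : (insPerm n b).symm (Fin.castAdd n (if b then (0 : Fin 2) else 1)) =
      Fin.cast (Nat.add_sub_cancel' (h12 n))
        (Fin.natAdd (1 + n) (⟨0, by omega⟩ : Fin (2 + n - (1 + n)))) := by
    rw [Equiv.symm_apply_eq, insPerm_na]
  have s2 : ∀ j : Fin n, (insPerm n b).symm (Fin.natAdd 2 j) =
      Fin.cast (Nat.add_sub_cancel' (h12 n))
        (Fin.castAdd (2 + n - (1 + n)) (Fin.natAdd 1 j)) := by
    intro j; rw [Equiv.symm_apply_eq, insPerm_ca_nat]
  -- coordinate computations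
  have C1 : F v (Fin.castAdd n (if b then (1 : Fin 2) else 0)) =
      v (Fin.castAdd n (if b then (1 : Fin 2) else 0)) := by
    rw [hmul, s0, oplusId_apply_lo, controlledPerm_apply_castAdd]
    rw [insPerm_ca_zero]
  have C2 : F v (Fin.castAdd n (if b then (0 : Fin 2) else 1)) =
      v (Fin.castAdd n (if b then (0 : Fin 2) else 1)) := by
    rw [hmul, s1, oplusId_apply_hi]
    rw [insPerm_na]
  have C3 : ∀ j : Fin n,
      F v (Fin.natAdd 2 j) =
      if v (Fin.castAdd n (if b then (1 : Fin 2) else 0)) = a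
      then p (fun j' => v (Fin.natAdd 2 j')) j else v (Fin.natAdd 2 j) := by
    intro j
    rw [hmul, s2, oplusId_apply_lo, controlledPerm_apply_natAdd]
    simp only [funext_iff, Fin.forall_fin_one, insPerm_ca_zero, insPerm_ca_nat]
  rw [condPerm_apply]
  refine Prod.ext ?_ ?_
  · funext i
    dsimp only
    rw [splitEquiv_fst, splitEquiv_fst]
    rcases b with _ | _
    · fin_cases i
      · exact C1
      · exact C2
    · fin_cases i
      · exact C2
      · exact C1
  · funext j
    dsimp only
    rw [splitEquiv_snd, C3]
    have e1 : (splitEquiv A 2 n v).1 (if b then (1 : Fin 2) else 0) =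
        v (Fin.castAdd n (if b then (1 : Fin 2) else 0)) := splitEquiv_fst v _
    have e2 : (splitEquiv A 2 n v).2 = fun j' => v (Fin.natAdd 2 j') :=
      funext fun j' => splitEquiv_snd v j'
    rw [apply_ite (fun t : Fin n → A => t j), e1, e2]

end MainExt


/-- if `X ⊆ A^n` has at least five elements and `P` is the set of `3`-cycles of
distinct elements of `X`, then every `2`-controlled `P`-permutation of `A^(2+n)` belongs to
the subgroup of `Sym(A^(2+n))` generated by all extensions of `1`-controlled
`P`-permutations. -/
theorem stmt17 (A : Type*) [Fintype A] [DecidableEq A] (n : ℕ) (X : Set (Fin n → A))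
    (hX : 5 ≤ X.ncard) :
    ∀ g ∈ ControlledPerms 2 {s : Equiv.Perm (Fin n → A) | ∃ x y z,
        x ∈ X ∧ y ∈ X ∧ z ∈ X ∧ x ≠ y ∧ y ≠ z ∧ x ≠ z ∧
        s = Equiv.swap x y * Equiv.swap y z},
      g ∈ Subgroup.closure {g' : Equiv.Perm (Fin (2 + n) → A) |
        ∃ p ∈ ControlledPerms 1 {s : Equiv.Perm (Fin n → A) | ∃ x y z,
          x ∈ X ∧ y ∈ X ∧ z ∈ X ∧ x ≠ y ∧ y ≠ z ∧ x ≠ z ∧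
          s = Equiv.swap x y * Equiv.swap y z}, IsExtensionOf p g'} := by

  intro g hg
  obtain ⟨w, s, hs, α, rfl⟩ := hg
  obtain ⟨x, y, z, hxX, hyX, hzX, hxy, hyz, hxz, rfl⟩ := hs
  classical
  have hXfin : X.Finite := Set.toFinite X
  have hsub : ({x, y, z} : Set (Fin n → A)) ⊆ X := by
    intro t ht
    simp only [Set.mem_insert_iff, Set.mem_singleton_iff] at ht
    rcases ht with rfl | rfl | rfl <;> assumption
  have hdiff : 1 < (X \ {x, y, z}).ncard := by
    have t1 := Set.ncard_insert_le x ({y, z} : Set (Fin n → A))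
    have t2 := Set.ncard_insert_le y ({z} : Set (Fin n → A))
    have t3 : ({z} : Set (Fin n → A)).ncard = 1 := Set.ncard_singleton z
    rw [Set.ncard_diff hsub (Set.toFinite _)]
    omega
  obtain ⟨u, hu, v, hv, huv⟩ := (Set.one_lt_ncard hXfin.diff).mp hdiff
  obtain ⟨huX, hu3⟩ := hu
  obtain ⟨hvX, hv3⟩ := hv
  simp only [Set.mem_insert_iff, Set.mem_singleton_iff, not_or] at hu3 hv3
  obtain ⟨hux, huy, huz⟩ := hu3
  obtain ⟨hvx, hvy, hvz⟩ := hv3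
  set p' := Equiv.swap x y * Equiv.swap y u with hp'
  set q' := Equiv.swap x z * Equiv.swap z v with hq'
  have comm := three_cycle_commutator hxy hxz (Ne.symm hux) (Ne.symm hvx) hyz
    (Ne.symm huy) (Ne.symm hvy) (Ne.symm huz) (Ne.symm hvz) huv
  set F : Equiv.Perm (Fin (2 + n) → A) :=
    wirePerm (insPerm n false) * oplusId (h12 n) (controlledPerm (fun _ : Fin 1 => w 0) p') *
      (wirePerm (insPerm n false))⁻¹ with hF
  set G : Equiv.Perm (Fin (2 + n) → A) :=
    wirePerm (insPerm n true) * oplusId (h12 n) (controlledPerm (fun _ : Fin 1 => w 1) q') *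
      (wirePerm (insPerm n true))⁻¹ with hG
  have mF : F = (splitEquiv A 2 n).symm.permCongr
      (condPerm (fun u' : Fin 2 → A => u' 0 = w 0) p') := by
    rw [hF, main_ext]
    exact congrArg _ (condPerm_congr _ _ _ (fun u' => by norm_num))
  have mG : G = (splitEquiv A 2 n).symm.permCongr
      (condPerm (fun u' : Fin 2 → A => u' 1 = w 1) q') := by
    rw [hG, main_ext]
    exact congrArg _ (condPerm_congr _ _ _ (fun u' => by norm_num))
  have key : controlledPerm w (Equiv.swap x y * Equiv.swap y z) = F * G * F⁻¹ * G⁻¹ := by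
    rw [comm, controlledPerm_eq_condPerm]
    rw [condPerm_congr (fun u' => u' = w)
        (fun u' : Fin 2 → A => u' 0 = w 0 ∧ u' 1 = w 1) _
        (fun u' => by simp only [funext_iff, Fin.forall_fin_two])]
    rw [← condPerm_commutator, permCongr_mul, permCongr_mul, permCongr_mul,
        permCongr_inv, permCongr_inv, ← mF, ← mG]
  have gdecomp : wirePerm α * controlledPerm w (Equiv.swap x y * Equiv.swap y z) *
      (wirePerm α)⁻¹ =
      (wirePerm α * F * (wirePerm α)⁻¹) * (wirePerm α * G * (wirePerm α)⁻¹) *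
      (wirePerm α * F * (wirePerm α)⁻¹)⁻¹ * (wirePerm α * G * (wirePerm α)⁻¹)⁻¹ := by
    rw [key]; group
  rw [gdecomp]
  have hmemF : (wirePerm α * F * (wirePerm α)⁻¹) ∈
      {g' : Equiv.Perm (Fin (2 + n) → A) |
        ∃ p ∈ ControlledPerms 1 {s : Equiv.Perm (Fin n → A) | ∃ x y z,
          x ∈ X ∧ y ∈ X ∧ z ∈ X ∧ x ≠ y ∧ y ≠ z ∧ x ≠ z ∧
          s = Equiv.swap x y * Equiv.swap y z}, IsExtensionOf p g'} := by
    refine ⟨controlledPerm (fun _ : Fin 1 => w 0) p',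
      ⟨(fun _ : Fin 1 => w 0), p',
        ⟨x, y, u, hxX, hyX, huX, hxy, Ne.symm huy, Ne.symm hux, rfl⟩,
        1, by rw [wirePerm_one]; group⟩,
      h12 n, α * insPerm n false, ?_⟩
    rw [wirePerm_mul, hF]
    group
  have hmemG : (wirePerm α * G * (wirePerm α)⁻¹) ∈
      {g' : Equiv.Perm (Fin (2 + n) → A) |
        ∃ p ∈ ControlledPerms 1 {s : Equiv.Perm (Fin n → A) | ∃ x y z,
          x ∈ X ∧ y ∈ X ∧ z ∈ X ∧ x ≠ y ∧ y ≠ z ∧ x ≠ z ∧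
          s = Equiv.swap x y * Equiv.swap y z}, IsExtensionOf p g'} := by
    refine ⟨controlledPerm (fun _ : Fin 1 => w 1) q',
      ⟨(fun _ : Fin 1 => w 1), q',
        ⟨x, z, v, hxX, hzX, hvX, hxz, Ne.symm hvz, Ne.symm hvx, rfl⟩,
        1, by rw [wirePerm_one]; group⟩,
      h12 n, α * insPerm n true, ?_⟩
    rw [wirePerm_mul, hG]
    group
  exact mul_mem (mul_mem (mul_mem (Subgroup.subset_closure hmemF)
      (Subgroup.subset_closure hmemG))
      (inv_mem (Subgroup.subset_closure hmemF)))
    (inv_mem (Subgroup.subset_closure hmemG))
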